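/- A set E ⊆ ℤ × ℤ is finite if and only if there exist sets N, S ⊆ ℤ × ℤ such that: (1) for all (a,b), (a,b) ∈ N iff ((a−1,b) ∈ N and (a,b−1) ∈ N); (2) for all (a,b), (a,b) ∈ S iff ((a+1,b) ∈ S and (a,b+1) ∈ S); (3) there exists (a,b) ∈ N with (a,b+1) ∉ N and (a+1,b) ∉ N; (4) there exists (a,b) ∈ S with (a,b−1) ∉ S and (a−1,b) ∉ S; and (5) E ⊆ N ∩ S. -/

import Mathlib

private lemma qp_down {N : Set (ℤ × ℤ)}
    (hN : ∀ a b : ℤ, (a, b) ∈ N ↔ ((a - 1, b) ∈ N ∧ (a, b - 1) ∈ N)) :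
    ∀ a b : ℤ, (a, b) ∈ N → ∀ a' b' : ℤ, a' ≤ a → b' ≤ b → (a', b') ∈ N := by
  have hrow : ∀ a b : ℤ, (a, b) ∈ N → ∀ a' : ℤ, a' ≤ a → (a', b) ∈ N := by
    intro a b hab a'
    refine Int.le_induction_down (motive := fun n _ => (n, b) ∈ N) hab (fun n _ hn => ?_) a'
    exact ((hN n b).1 hn).1
  intro a b hab a' b' ha' hb'
  have h1 : (a', b) ∈ N := hrow a b hab a' ha'
  refine Int.le_induction_down (motive := fun n _ => (a', n) ∈ N) h1 (fun n _ hn => ?_) b' hb'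
  exact ((hN a' n).1 hn).2

private lemma qp_bound {N : Set (ℤ × ℤ)}
    (hN : ∀ a b : ℤ, (a, b) ∈ N ↔ ((a - 1, b) ∈ N ∧ (a, b - 1) ∈ N))
    {a₀ b₀ : ℤ} (h0 : (a₀, b₀) ∈ N) (h1 : (a₀, b₀ + 1) ∉ N) (h2 : (a₀ + 1, b₀) ∉ N) :
    ∀ a b : ℤ, (a, b) ∈ N → a ≤ a₀ ∧ b ≤ b₀ := by
  intro a b hab
  constructor
  · by_contra h
    push_neg at h
    have ha : a₀ + 1 ≤ a := by omega
    rcases le_or_gt b₀ b with hb | hb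
    · exact h2 (qp_down hN a b hab _ _ ha hb)
    · -- (a₀+1, b) ∈ N, climb up to (a₀+1, b₀)
      have hb' : (a₀ + 1, b) ∈ N := qp_down hN a b hab _ _ ha le_rfl
      have climb : ∀ c : ℤ, b ≤ c → c ≤ b₀ → (a₀ + 1, c) ∈ N := by
        intro c hc
        refine Int.le_induction (motive := fun n _ => n ≤ b₀ → (a₀ + 1, n) ∈ N) (fun _ => hb') (fun n _ ih hn1 => ?_) c hc
        have hn : (a₀ + 1, n) ∈ N := ih (by omega)
        have hup : (a₀, n + 1) ∈ N := qp_down hN a₀ b₀ h0 _ _ le_rfl (by omega)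
        exact (hN (a₀ + 1) (n + 1)).2 ⟨by simpa using hup, by simpa using hn⟩
      exact h2 (climb b₀ (by omega) le_rfl)
  · by_contra h
    push_neg at h
    have hb : b₀ + 1 ≤ b := by omega
    rcases le_or_gt a₀ a with ha | ha
    · exact h1 (qp_down hN a b hab _ _ ha hb)
    · have ha' : (a, b₀ + 1) ∈ N := qp_down hN a b hab _ _ le_rfl hb
      have climb : ∀ c : ℤ, a ≤ c → c ≤ a₀ → (c, b₀ + 1) ∈ N := by
        intro c hc
        refine Int.le_induction (motive := fun n _ => n ≤ a₀ → (n, b₀ + 1) ∈ N) (fun _ => ha') (fun n _ ih hn1 => ?_) c hc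
        have hn : (n, b₀ + 1) ∈ N := ih (by omega)
        have hup : (n + 1, b₀) ∈ N := qp_down hN a₀ b₀ h0 _ _ (by omega) le_rfl
        exact (hN (n + 1) (b₀ + 1)).2 ⟨by simpa using hn, by simpa using hup⟩
      exact h1 (climb a₀ (by omega) le_rfl)

/-- A set `E ⊆ ℤ × ℤ` is finite if and only if it is contained in the
intersection of a nondegenerate southwest quarter-plane `N` and a nondegenerate
northeast quarter-plane `S`. -/
theorem finite_iff_between_quarterPlanes (E : Set (ℤ × ℤ)) :
    E.Finite ↔ ∃ N S : Set (ℤ × ℤ),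
      (∀ a b : ℤ, (a, b) ∈ N ↔ ((a - 1, b) ∈ N ∧ (a, b - 1) ∈ N)) ∧
      (∀ a b : ℤ, (a, b) ∈ S ↔ ((a + 1, b) ∈ S ∧ (a, b + 1) ∈ S)) ∧
      (∃ a b : ℤ, (a, b) ∈ N ∧ (a, b + 1) ∉ N ∧ (a + 1, b) ∉ N) ∧
      (∃ a b : ℤ, (a, b) ∈ S ∧ (a, b - 1) ∉ S ∧ (a - 1, b) ∉ S) ∧
      E ⊆ N ∩ S := by
  constructor
  · intro hE
    obtain ⟨A, hA⟩ := (hE.image Prod.fst).bddAbove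
    obtain ⟨B, hB⟩ := (hE.image Prod.snd).bddAbove
    obtain ⟨C, hC⟩ := (hE.image Prod.fst).bddBelow
    obtain ⟨D, hD⟩ := (hE.image Prod.snd).bddBelow
    refine ⟨{p | p.1 ≤ A ∧ p.2 ≤ B}, {p | C ≤ p.1 ∧ D ≤ p.2}, ?_, ?_, ?_, ?_, ?_⟩
    · intro a b; simp only [Set.mem_setOf_eq]; omega
    · intro a b; simp only [Set.mem_setOf_eq]; omega
    · exact ⟨A, B, by simp, by simp, by simp⟩
    · exact ⟨C, D, by simp, by simp, by simp⟩
    · intro p hp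
      exact ⟨⟨hA ⟨p, hp, rfl⟩, hB ⟨p, hp, rfl⟩⟩, ⟨hC ⟨p, hp, rfl⟩, hD ⟨p, hp, rfl⟩⟩⟩
  · rintro ⟨N, S, hN, hS, ⟨a₀, b₀, hn0, hn1, hn2⟩, ⟨c₀, d₀, hs0, hs1, hs2⟩, hE⟩
    set N' : Set (ℤ × ℤ) := {p | (-p.1, -p.2) ∈ S} with hN'def
    have hN' : ∀ a b : ℤ, (a, b) ∈ N' ↔ ((a - 1, b) ∈ N' ∧ (a, b - 1) ∈ N') := by
      intro a b
      simp only [hN'def, Set.mem_setOf_eq]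
      rw [hS (-a) (-b)]
      constructor
      · rintro ⟨h1, h2⟩
        exact ⟨by rw [show (-(a-1)) = -a + 1 by ring]; exact h1,
               by rw [show (-(b-1)) = -b + 1 by ring]; exact h2⟩
      · rintro ⟨h1, h2⟩
        exact ⟨by rw [show (-a + 1) = -(a-1) by ring]; exact h1,
               by rw [show (-b + 1) = -(b-1) by ring]; exact h2⟩
    have hbS := qp_bound hN' (a₀ := -c₀) (b₀ := -d₀)
      (by simpa [hN'def] using hs0)
      (by simp only [hN'def, Set.mem_setOf_eq]; rw [show (-(-d₀ + 1)) = d₀ - 1 by ring]; simpa)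
      (by simp only [hN'def, Set.mem_setOf_eq]; rw [show (-(-c₀ + 1)) = c₀ - 1 by ring]; simpa)
    have hbN := qp_bound hN hn0 hn1 hn2
    apply Set.Finite.subset (Set.finite_Icc (c₀, d₀) (a₀, b₀))
    intro p hp
    obtain ⟨hpN, hpS⟩ := hE hp
    have h1 := hbN p.1 p.2 hpN
    have h2 := hbS (-p.1) (-p.2) (by simp [hN'def]; exact hpS)
    simp only [Set.mem_Icc, Prod.le_def]
    omega
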